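/- For all parameters A, B, C ∈ ℂ with (C;q)_n ≠ 0 for all n, all r, s ∈ ℕ, and all x, y ∈ ℂ with 0 < |x| < 1 and 0 < |y| < 1, applying first the s-fold iterated Jackson q-derivative in y and then the r-fold iterated Jackson q₁-derivative in x to Φ₁(A,B;C;q,q₁;x,y) yields [(A;q)_{r+s} (B;q₁)_r / ((1−q₁)^r (1−q)^s (C;q)_{r+s})] · Φ₁(q^{r+s} A, q₁^r B; q^{r+s} C; q,q₁; x, y). (Equation (2.16).) -/

import Mathlib

open Complex

/-- The q-shifted factorial (z;q)_n = prod_{r=0}^{n-1} (1 - z q^r). -/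
noncomputable def qPoch (q z : ℂ) (n : ℕ) : ℂ :=
  ∏ r ∈ Finset.range n, (1 - z * q ^ r)

/-- The bibasic Humbert hypergeometric function Φ₁ on two independent bases q and q₁. -/
noncomputable def Phi1 (q q1 A B C x y : ℂ) : ℂ :=
  ∑' p : ℕ × ℕ,
    qPoch q A (p.1 + p.2) * qPoch q1 B p.1 /
      (qPoch q C (p.1 + p.2) * qPoch q1 q1 p.1 * qPoch q q p.2) * x ^ p.1 * y ^ p.2

/-- The Jackson p-derivative. -/
noncomputable def jackson (p : ℂ) (f : ℂ → ℂ) (x : ℂ) : ℂ :=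
  (f x - f (p * x)) / ((1 - p) * x)

lemma qPoch_succ_front (q z : ℂ) (n : ℕ) :
    qPoch q z (n + 1) = (1 - z) * qPoch q (q * z) n := by
  unfold qPoch
  rw [Finset.prod_range_succ', mul_comm, pow_zero, mul_one]
  congr 1
  exact Finset.prod_congr rfl fun i _ => by rw [pow_succ]; ring

lemma qPoch_succ_back (q z : ℂ) (n : ℕ) :
    qPoch q z (n + 1) = qPoch q z n * (1 - z * q ^ n) :=
  Finset.prod_range_succ _ _

lemma qPoch_add (q z : ℂ) (m n : ℕ) :
    qPoch q z (m + n) = qPoch q z m * qPoch q (q ^ m * z) n := by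
  unfold qPoch
  rw [Finset.prod_range_add]
  congr 1
  exact Finset.prod_congr rfl fun i _ => by rw [pow_add]; ring

lemma one_sub_ne_of_abs_lt {w : ℂ} (h : ‖w‖ < 1) : (1 : ℂ) - w ≠ 0 := by
  intro h0
  have : w = 1 := by linear_combination -h0
  rw [this] at h; simp at h

lemma abs_mul_pow_lt_one {q : ℂ} (hq : ‖q‖ < 1) (r : ℕ) :
    ‖q * q ^ r‖ < 1 := by
  rw [norm_mul, norm_pow]
  have h1 : ‖q‖ ^ r ≤ 1 := pow_le_one₀ (norm_nonneg q) hq.le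
  nlinarith [norm_nonneg q]

lemma qPoch_self_ne_zero {q : ℂ} (hq : ‖q‖ < 1) (n : ℕ) :
    qPoch q q n ≠ 0 := by
  unfold qPoch
  rw [Finset.prod_ne_zero_iff]
  intro r _
  exact one_sub_ne_of_abs_lt (abs_mul_pow_lt_one hq r)

lemma qPoch_factor_ne_zero {q z : ℂ} {r : ℕ} (h : qPoch q z (r + 1) ≠ 0) :
    (1 : ℂ) - z * q ^ r ≠ 0 := by
  intro h0
  exact h (by unfold qPoch; exact Finset.prod_eq_zero (Finset.self_mem_range_succ r) h0)

lemma qPoch_shift_ne_zero {q z : ℂ} (h : ∀ n, qPoch q z n ≠ 0) (m n : ℕ) :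
    qPoch q (q ^ m * z) n ≠ 0 := by
  intro h0
  exact h (m + n) (by rw [qPoch_add, h0, mul_zero])

lemma geom_sum_le_inv (c : ℝ) (hc0 : 0 ≤ c) (hc : c < 1) (n : ℕ) :
    ∑ r ∈ Finset.range n, c ^ r ≤ (1 - c)⁻¹ := by
  have hs : Summable fun r : ℕ => c ^ r := summable_geometric_of_lt_one hc0 hc
  calc ∑ r ∈ Finset.range n, c ^ r ≤ ∑' r : ℕ, c ^ r :=
        Summable.sum_le_tsum _ (fun i _ => pow_nonneg hc0 i) hs
    _ = (1 - c)⁻¹ := tsum_geometric_of_lt_one hc0 hc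

lemma qPoch_abs_le (q z : ℂ) (hq : ‖q‖ < 1) (n : ℕ) :
    ‖qPoch q z n‖ ≤ Real.exp (‖z‖ * (1 - ‖q‖)⁻¹) := by
  unfold qPoch
  rw [norm_prod]
  calc ∏ r ∈ Finset.range n, ‖1 - z * q ^ r‖
      ≤ ∏ r ∈ Finset.range n, Real.exp (‖z‖ * ‖q‖ ^ r) := by
        apply Finset.prod_le_prod (fun r _ => norm_nonneg _)
        intro r _
        calc ‖1 - z * q ^ r‖ ≤ ‖(1:ℂ)‖ + ‖z * q ^ r‖ :=
              norm_sub_le _ _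
          _ = ‖z‖ * ‖q‖ ^ r + 1 := by
              rw [norm_mul, norm_pow]; simp [add_comm]
          _ ≤ Real.exp (‖z‖ * ‖q‖ ^ r) := Real.add_one_le_exp _
    _ = Real.exp (∑ r ∈ Finset.range n, ‖z‖ * ‖q‖ ^ r) :=
        (Real.exp_sum _ _).symm
    _ ≤ Real.exp (‖z‖ * (1 - ‖q‖)⁻¹) := by
        apply Real.exp_le_exp.mpr
        rw [← Finset.mul_sum]
        exact mul_le_mul_of_nonneg_left (geom_sum_le_inv _ (norm_nonneg q) hq n)
          (norm_nonneg z)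

lemma exp_neg_two_le {a : ℝ} (h0 : 0 ≤ a) (h : a ≤ 1 / 2) :
    Real.exp (-(2 * a)) ≤ 1 - a := by
  have h1 : 2 * a + 1 ≤ Real.exp (2 * a) := Real.add_one_le_exp _
  have h2 : Real.exp (-(2 * a)) * Real.exp (2 * a) = 1 := by
    rw [← Real.exp_add]; simp
  nlinarith [Real.exp_pos (-(2 * a)), Real.exp_pos (2 * a)]

lemma qPoch_abs_lower (q z : ℂ) (hq : ‖q‖ < 1)
    (h : ∀ n, qPoch q z n ≠ 0) :
    ∃ m : ℝ, 0 < m ∧ ∀ n, m ≤ ‖qPoch q z n‖ := by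
  -- choose N with |z| * |q|^N ≤ 1/2
  have htend : Filter.Tendsto (fun n : ℕ => ‖z‖ * ‖q‖ ^ n)
      Filter.atTop (nhds 0) := by
    simpa using (tendsto_pow_atTop_nhds_zero_of_lt_one (norm_nonneg q) hq).const_mul
      (‖z‖)
  obtain ⟨N, hN⟩ := Filter.eventually_atTop.mp
    (htend.eventually (eventually_le_nhds (by norm_num : (0:ℝ) < 1/2)))
  have hpos : ∀ n, 0 < ‖qPoch q z n‖ := fun n => norm_pos_iff.mpr (h n)
  set m1 : ℝ := (Finset.range (N + 1)).inf' (by simp) (fun n => ‖qPoch q z n‖)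
    with hm1
  have hm1pos : 0 < m1 := (Finset.lt_inf'_iff _).mpr (fun n _ => hpos n)
  set E : ℝ := Real.exp (-(2 * (‖z‖ * (1 - ‖q‖)⁻¹))) with hE
  have hEpos : 0 < E := Real.exp_pos _
  have hE1 : E ≤ 1 := by
    rw [hE, Real.exp_le_one_iff]
    have h1 : 0 ≤ ‖z‖ * (1 - ‖q‖)⁻¹ :=
      mul_nonneg (norm_nonneg z) (inv_nonneg.mpr (by linarith))
    linarith
  refine ⟨m1 * E, mul_pos hm1pos hEpos, fun n => ?_⟩
  rcases le_or_gt n N with hn | hn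
  · calc m1 * E ≤ m1 * 1 := mul_le_mul_of_nonneg_left hE1 hm1pos.le
      _ = m1 := mul_one _
      _ ≤ ‖qPoch q z n‖ :=
        Finset.inf'_le _ (Finset.mem_range.mpr (by omega))
  · -- n > N : split product
    have hfac : ∀ r : ℕ, Real.exp (-(2 * (‖z‖ * ‖q‖ ^ (N + r)))) ≤
        ‖1 - q ^ N * z * q ^ r‖ := by
      intro r
      have ha : ‖q ^ N * z * q ^ r‖ = ‖z‖ * ‖q‖ ^ (N + r) := by
        rw [norm_mul, norm_mul, norm_pow, norm_pow, pow_add]; ring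
      have hle : ‖z‖ * ‖q‖ ^ (N + r) ≤ 1 / 2 := hN (N + r) (by omega)
      have hge : (0:ℝ) ≤ ‖z‖ * ‖q‖ ^ (N + r) :=
        mul_nonneg (norm_nonneg z) (pow_nonneg (norm_nonneg q) _)
      calc Real.exp (-(2 * (‖z‖ * ‖q‖ ^ (N + r))))
          ≤ 1 - ‖z‖ * ‖q‖ ^ (N + r) := exp_neg_two_le hge hle
        _ = ‖(1:ℂ)‖ - ‖q ^ N * z * q ^ r‖ := by
            rw [norm_one, ha]
        _ ≤ ‖(1:ℂ) - q ^ N * z * q ^ r‖ := norm_sub_norm_le _ _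
        _ = ‖1 - q ^ N * z * q ^ r‖ := rfl
    have hsum : ∀ k : ℕ, ∑ r ∈ Finset.range k, ‖z‖ * ‖q‖ ^ (N + r) ≤
        ‖z‖ * (1 - ‖q‖)⁻¹ := by
      intro k
      calc ∑ r ∈ Finset.range k, ‖z‖ * ‖q‖ ^ (N + r)
          ≤ ∑ r ∈ Finset.range k, ‖z‖ * ‖q‖ ^ r := by
            apply Finset.sum_le_sum
            intro r _
            exact mul_le_mul_of_nonneg_left
              (pow_le_pow_of_le_one (norm_nonneg q) hq.le (by omega))
              (norm_nonneg z)
        _ = ‖z‖ * ∑ r ∈ Finset.range k, ‖q‖ ^ r := by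
            rw [Finset.mul_sum]
        _ ≤ ‖z‖ * (1 - ‖q‖)⁻¹ :=
            mul_le_mul_of_nonneg_left (geom_sum_le_inv _ (norm_nonneg q) hq k)
              (norm_nonneg z)
    have hk : ∀ k : ℕ, E ≤ ‖qPoch q (q ^ N * z) k‖ := by
      intro k
      unfold qPoch
      rw [norm_prod]
      calc E ≤ Real.exp (∑ r ∈ Finset.range k, -(2 * (‖z‖ * ‖q‖ ^ (N + r)))) := by
            apply Real.exp_le_exp.mpr
            rw [Finset.sum_neg_distrib, ← Finset.mul_sum]
            have := hsum k
            nlinarith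
        _ = ∏ r ∈ Finset.range k,
              Real.exp (-(2 * (‖z‖ * ‖q‖ ^ (N + r)))) := Real.exp_sum _ _
        _ ≤ ∏ r ∈ Finset.range k, ‖1 - q ^ N * z * q ^ r‖ :=
            Finset.prod_le_prod (fun r _ => (Real.exp_pos _).le) (fun r _ => hfac r)
    calc m1 * E ≤ ‖qPoch q z N‖ * ‖qPoch q (q ^ N * z) (n - N)‖ :=
          mul_le_mul (Finset.inf'_le _ (Finset.mem_range.mpr (by omega))) (hk (n - N))
            hEpos.le (norm_nonneg _)
      _ = ‖qPoch q z n‖ := by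
          rw [← norm_mul, ← qPoch_add, show N + (n - N) = n by omega]


lemma summable_term (q q1 A B C x y : ℂ) (hq : ‖q‖ < 1) (hq1 : ‖q1‖ < 1)
    (hC : ∀ n, qPoch q C n ≠ 0) (hx : ‖x‖ < 1) (hy : ‖y‖ < 1) :
    Summable (fun p : ℕ × ℕ =>
      qPoch q A (p.1 + p.2) * qPoch q1 B p.1 /
        (qPoch q C (p.1 + p.2) * qPoch q1 q1 p.1 * qPoch q q p.2) * x ^ p.1 * y ^ p.2) := by
  obtain ⟨mC, hmCpos, hmC⟩ := qPoch_abs_lower q C hq hC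
  obtain ⟨m1, hm1pos, hm1⟩ := qPoch_abs_lower q1 q1 hq1 (qPoch_self_ne_zero hq1)
  obtain ⟨m2, hm2pos, hm2⟩ := qPoch_abs_lower q q hq (qPoch_self_ne_zero hq)
  set KA : ℝ := Real.exp (‖A‖ * (1 - ‖q‖)⁻¹) with hKA
  set KB : ℝ := Real.exp (‖B‖ * (1 - ‖q1‖)⁻¹) with hKB
  set M : ℝ := KA * KB / (mC * m1 * m2) with hM
  have hMnn : 0 ≤ M := by
    apply div_nonneg (mul_nonneg (Real.exp_pos _).le (Real.exp_pos _).le)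
    positivity
  apply Summable.of_norm
  have hgeom : Summable (fun p : ℕ × ℕ =>
      (‖x‖ ^ p.1) * (‖y‖ ^ p.2)) :=
    Summable.mul_of_nonneg (summable_geometric_of_lt_one (norm_nonneg x) hx)
      (summable_geometric_of_lt_one (norm_nonneg y) hy)
      (fun _ => pow_nonneg (norm_nonneg x) _)
      (fun _ => pow_nonneg (norm_nonneg y) _)
  refine Summable.of_nonneg_of_le (fun p => norm_nonneg _) ?_ (hgeom.mul_left M)
  rintro ⟨l, k⟩
  have hden1 : (0:ℝ) < mC * m1 * m2 := by positivity
  have hcoef : ‖qPoch q A (l + k) * qPoch q1 B l /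
      (qPoch q C (l + k) * qPoch q1 q1 l * qPoch q q k)‖ ≤ M := by
    rw [norm_div, norm_mul, norm_mul, norm_mul]
    apply div_le_div₀ (mul_nonneg (Real.exp_pos _).le (Real.exp_pos _).le)
    · exact mul_le_mul (qPoch_abs_le q A hq _) (qPoch_abs_le q1 B hq1 _)
        (norm_nonneg _) (Real.exp_pos _).le
    · exact hden1
    · exact mul_le_mul (mul_le_mul (hmC _) (hm1 _) hm1pos.le (norm_nonneg _))
        (hm2 _) hm2pos.le (mul_nonneg (norm_nonneg _) (norm_nonneg _))
  calc ‖qPoch q A (l + k) * qPoch q1 B l /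
        (qPoch q C (l + k) * qPoch q1 q1 l * qPoch q q k) * x ^ l * y ^ k‖
      = ‖qPoch q A (l + k) * qPoch q1 B l /
          (qPoch q C (l + k) * qPoch q1 q1 l * qPoch q q k)‖ *
        (‖x‖ ^ l * ‖y‖ ^ k) := by
        rw [norm_mul, norm_mul, norm_pow, norm_pow]; ring
    _ ≤ M * (‖x‖ ^ l * ‖y‖ ^ k) := by
        apply mul_le_mul_of_nonneg_right hcoef
        positivity

lemma stepY (q q1 A B C x y : ℂ) (hq : ‖q‖ < 1) (hq1 : ‖q1‖ < 1)
    (hC : ∀ n, qPoch q C n ≠ 0) (hx : ‖x‖ < 1)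
    (hy0 : y ≠ 0) (hy : ‖y‖ < 1) :
    jackson q (fun u => Phi1 q q1 A B C x u) y
      = (1 - A) / ((1 - q) * (1 - C)) * Phi1 q q1 (q * A) B (q * C) x y := by
  have hqne : (1:ℂ) - q ≠ 0 := one_sub_ne_of_abs_lt hq
  have hC1 : (1:ℂ) - C ≠ 0 := by
    have h := hC 1
    unfold qPoch at h
    simpa using h
  have hC' : ∀ n, qPoch q (q * C) n ≠ 0 := by
    intro n
    have h := qPoch_shift_ne_zero hC 1 n
    simpa using h
  have hqy : ‖q * y‖ < 1 := by
    rw [norm_mul]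
    nlinarith [norm_nonneg q, norm_nonneg y]
  have hS1 := summable_term q q1 A B C x y hq hq1 hC hx hy
  have hS2 := summable_term q q1 A B C x (q * y) hq hq1 hC hx hqy
  unfold jackson Phi1
  rw [← Summable.tsum_sub hS1 hS2, ← tsum_div_const, ← tsum_mul_left]
  -- now both sides are tsums; use injection (l,k) ↦ (l,k+1)
  set f : ℕ × ℕ → ℂ := fun p =>
    (qPoch q A (p.1 + p.2) * qPoch q1 B p.1 /
        (qPoch q C (p.1 + p.2) * qPoch q1 q1 p.1 * qPoch q q p.2) * x ^ p.1 * y ^ p.2 -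
      qPoch q A (p.1 + p.2) * qPoch q1 B p.1 /
        (qPoch q C (p.1 + p.2) * qPoch q1 q1 p.1 * qPoch q q p.2) * x ^ p.1 * (q * y) ^ p.2) /
      ((1 - q) * y) with hf
  have h0 : ∀ p : ℕ × ℕ, p.2 = 0 → f p = 0 := by
    rintro ⟨l, k⟩ h
    simp only [hf] at *
    subst h
    simp
  have hinj : Function.Injective (fun p : ℕ × ℕ => (p.1, p.2 + 1)) := by
    rintro ⟨a, b⟩ ⟨c, d⟩ h
    simp only [Prod.mk.injEq] at h
    exact Prod.ext h.1 (by omega)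
  have hsup : Function.support f ⊆ Set.range (fun p : ℕ × ℕ => (p.1, p.2 + 1)) := by
    rintro ⟨l, k⟩ hp
    cases k with
    | zero => exact absurd (h0 (l, 0) rfl) hp
    | succ k => exact ⟨(l, k), rfl⟩
  rw [← hinj.tsum_eq hsup]
  apply tsum_congr
  rintro ⟨l, k⟩
  simp only [hf]
  have e1 : qPoch q A (l + (k + 1)) = (1 - A) * qPoch q (q * A) (l + k) :=
    qPoch_succ_front q A (l + k)
  have e2 : qPoch q C (l + (k + 1)) = (1 - C) * qPoch q (q * C) (l + k) :=
    qPoch_succ_front q C (l + k)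
  have e3 : qPoch q q (k + 1) = qPoch q q k * (1 - q * q ^ k) := qPoch_succ_back q q k
  have hfac : (1:ℂ) - q * q ^ k ≠ 0 := one_sub_ne_of_abs_lt (abs_mul_pow_lt_one hq k)
  have hqq : qPoch q q k ≠ 0 := qPoch_self_ne_zero hq k
  have hq1q1 : qPoch q1 q1 l ≠ 0 := qPoch_self_ne_zero hq1 l
  have hqC : qPoch q (q * C) (l + k) ≠ 0 := hC' (l + k)
  rw [e1, e2, e3]
  have hc : (1 - A) * qPoch q (q * A) (l + k) * qPoch q1 B l /
      ((1 - C) * qPoch q (q * C) (l + k) * qPoch q1 q1 l * (qPoch q q k * (1 - q * q ^ k)))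
      = (1 - A) / ((1 - C) * (1 - q * q ^ k)) *
        (qPoch q (q * A) (l + k) * qPoch q1 B l /
          (qPoch q (q * C) (l + k) * qPoch q1 q1 l * qPoch q q k)) := by
    field_simp
  have hyp : (q * y) ^ (k + 1) = q * q ^ k * y ^ (k + 1) := by ring
  rw [hc, hyp, pow_succ y k]
  generalize qPoch q (q * A) (l + k) * qPoch q1 B l /
      (qPoch q (q * C) (l + k) * qPoch q1 q1 l * qPoch q q k) = t
  field_simp

lemma stepX (q q1 A B C x y : ℂ) (hq : ‖q‖ < 1) (hq1 : ‖q1‖ < 1)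
    (hC : ∀ n, qPoch q C n ≠ 0) (hx0 : x ≠ 0) (hx : ‖x‖ < 1)
    (hy : ‖y‖ < 1) :
    jackson q1 (fun t => Phi1 q q1 A B C t y) x
      = (1 - A) * (1 - B) / ((1 - q1) * (1 - C)) * Phi1 q q1 (q * A) (q1 * B) (q * C) x y := by
  have hq1ne : (1:ℂ) - q1 ≠ 0 := one_sub_ne_of_abs_lt hq1
  have hC1 : (1:ℂ) - C ≠ 0 := by
    have h := hC 1
    unfold qPoch at h
    simpa using h
  have hC' : ∀ n, qPoch q (q * C) n ≠ 0 := by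
    intro n
    have h := qPoch_shift_ne_zero hC 1 n
    simpa using h
  have hq1x : ‖q1 * x‖ < 1 := by
    rw [norm_mul]
    nlinarith [norm_nonneg q1, norm_nonneg x]
  have hS1 := summable_term q q1 A B C x y hq hq1 hC hx hy
  have hS2 := summable_term q q1 A B C (q1 * x) y hq hq1 hC hq1x hy
  unfold jackson Phi1
  rw [← Summable.tsum_sub hS1 hS2, ← tsum_div_const, ← tsum_mul_left]
  set f : ℕ × ℕ → ℂ := fun p =>
    (qPoch q A (p.1 + p.2) * qPoch q1 B p.1 /
        (qPoch q C (p.1 + p.2) * qPoch q1 q1 p.1 * qPoch q q p.2) * x ^ p.1 * y ^ p.2 -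
      qPoch q A (p.1 + p.2) * qPoch q1 B p.1 /
        (qPoch q C (p.1 + p.2) * qPoch q1 q1 p.1 * qPoch q q p.2) * (q1 * x) ^ p.1 * y ^ p.2) /
      ((1 - q1) * x) with hf
  have h0 : ∀ p : ℕ × ℕ, p.1 = 0 → f p = 0 := by
    rintro ⟨l, k⟩ h
    simp only [hf] at *
    subst h
    simp
  have hinj : Function.Injective (fun p : ℕ × ℕ => (p.1 + 1, p.2)) := by
    rintro ⟨a, b⟩ ⟨c, d⟩ h
    simp only [Prod.mk.injEq] at h
    exact Prod.ext (by omega) h.2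
  have hsup : Function.support f ⊆ Set.range (fun p : ℕ × ℕ => (p.1 + 1, p.2)) := by
    rintro ⟨l, k⟩ hp
    cases l with
    | zero => exact absurd (h0 (0, k) rfl) hp
    | succ l => exact ⟨(l, k), rfl⟩
  rw [← hinj.tsum_eq hsup]
  apply tsum_congr
  rintro ⟨l, k⟩
  simp only [hf]
  rw [show l + 1 + k = (l + k) + 1 from by omega]
  have e1 : qPoch q A (l + k + 1) = (1 - A) * qPoch q (q * A) (l + k) :=
    qPoch_succ_front q A (l + k)
  have e2 : qPoch q C (l + k + 1) = (1 - C) * qPoch q (q * C) (l + k) :=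
    qPoch_succ_front q C (l + k)
  have e3 : qPoch q1 B (l + 1) = (1 - B) * qPoch q1 (q1 * B) l := qPoch_succ_front q1 B l
  have e4 : qPoch q1 q1 (l + 1) = qPoch q1 q1 l * (1 - q1 * q1 ^ l) := qPoch_succ_back q1 q1 l
  have hfac : (1:ℂ) - q1 * q1 ^ l ≠ 0 := one_sub_ne_of_abs_lt (abs_mul_pow_lt_one hq1 l)
  have hqq : qPoch q q k ≠ 0 := qPoch_self_ne_zero hq k
  have hq1q1 : qPoch q1 q1 l ≠ 0 := qPoch_self_ne_zero hq1 l
  have hqC : qPoch q (q * C) (l + k) ≠ 0 := hC' (l + k)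
  rw [e1, e2, e3, e4]
  have hc : (1 - A) * qPoch q (q * A) (l + k) * ((1 - B) * qPoch q1 (q1 * B) l) /
      ((1 - C) * qPoch q (q * C) (l + k) * (qPoch q1 q1 l * (1 - q1 * q1 ^ l)) * qPoch q q k)
      = (1 - A) * (1 - B) / ((1 - C) * (1 - q1 * q1 ^ l)) *
        (qPoch q (q * A) (l + k) * qPoch q1 (q1 * B) l /
          (qPoch q (q * C) (l + k) * qPoch q1 q1 l * qPoch q q k)) := by
    field_simp
  have hyp : (q1 * x) ^ (l + 1) = q1 * q1 ^ l * x ^ (l + 1) := by ring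
  rw [hc, hyp, pow_succ x l]
  generalize qPoch q (q * A) (l + k) * qPoch q1 (q1 * B) l /
      (qPoch q (q * C) (l + k) * qPoch q1 q1 l * qPoch q q k) = t
  field_simp

lemma iterY (q q1 A B C x : ℂ) (hq : ‖q‖ < 1) (hq1 : ‖q1‖ < 1)
    (hqne0 : q ≠ 0) (hC : ∀ n, qPoch q C n ≠ 0) (hx : ‖x‖ < 1) :
    ∀ (s : ℕ) (y : ℂ), y ≠ 0 → ‖y‖ < 1 →
      (jackson q)^[s] (fun u => Phi1 q q1 A B C x u) y
        = qPoch q A s / ((1 - q) ^ s * qPoch q C s) *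
            Phi1 q q1 (q ^ s * A) B (q ^ s * C) x y := by
  intro s
  induction s with
  | zero =>
    intro y _ _
    simp [qPoch]
  | succ s ih =>
    intro y hy0 hy
    have h1q : (1:ℂ) - q ≠ 0 := one_sub_ne_of_abs_lt hq
    have hqy0 : q * y ≠ 0 := mul_ne_zero hqne0 hy0
    have hqy : ‖q * y‖ < 1 := by
      rw [norm_mul]
      nlinarith [norm_nonneg q, norm_nonneg y]
    rw [Function.iterate_succ_apply' (jackson q) s]
    have hjy : jackson q ((jackson q)^[s] (fun u => Phi1 q q1 A B C x u)) y
        = qPoch q A s / ((1 - q) ^ s * qPoch q C s) *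
            jackson q (fun u => Phi1 q q1 (q ^ s * A) B (q ^ s * C) x u) y := by
      simp only [jackson]
      rw [ih y hy0 hy, ih (q * y) hqy0 hqy]
      ring
    rw [hjy, stepY q q1 (q ^ s * A) B (q ^ s * C) x y hq hq1
      (qPoch_shift_ne_zero hC s) hx hy0 hy]
    have hAC : q * (q ^ s * A) = q ^ (s + 1) * A ∧ q * (q ^ s * C) = q ^ (s + 1) * C := by
      constructor <;> (rw [pow_succ]; ring)
    rw [hAC.1, hAC.2]
    have eA : qPoch q A (s + 1) = qPoch q A s * (1 - q ^ s * A) := by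
      rw [qPoch_succ_back]; ring_nf
    have eC : qPoch q C (s + 1) = qPoch q C s * (1 - q ^ s * C) := by
      rw [qPoch_succ_back]; ring_nf
    have hCs : qPoch q C s ≠ 0 := hC s
    have hCfac : (1:ℂ) - q ^ s * C ≠ 0 := by
      intro h0
      exact hC (s + 1) (by rw [eC, h0, mul_zero])
    rw [eA, eC]
    field_simp
    ring

lemma iterX (q q1 A B C y : ℂ) (hq : ‖q‖ < 1) (hq1 : ‖q1‖ < 1)
    (hq1ne0 : q1 ≠ 0) (hC : ∀ n, qPoch q C n ≠ 0) (hy : ‖y‖ < 1) :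
    ∀ (r : ℕ) (x : ℂ), x ≠ 0 → ‖x‖ < 1 →
      (jackson q1)^[r] (fun t => Phi1 q q1 A B C t y) x
        = qPoch q A r * qPoch q1 B r / ((1 - q1) ^ r * qPoch q C r) *
            Phi1 q q1 (q ^ r * A) (q1 ^ r * B) (q ^ r * C) x y := by
  intro r
  induction r with
  | zero =>
    intro x _ _
    simp [qPoch]
  | succ r ih =>
    intro x hx0 hx
    have h1q1 : (1:ℂ) - q1 ≠ 0 := one_sub_ne_of_abs_lt hq1
    have hq1x0 : q1 * x ≠ 0 := mul_ne_zero hq1ne0 hx0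
    have hq1x : ‖q1 * x‖ < 1 := by
      rw [norm_mul]
      nlinarith [norm_nonneg q1, norm_nonneg x]
    rw [Function.iterate_succ_apply' (jackson q1) r]
    have hjx : jackson q1 ((jackson q1)^[r] (fun t => Phi1 q q1 A B C t y)) x
        = qPoch q A r * qPoch q1 B r / ((1 - q1) ^ r * qPoch q C r) *
            jackson q1 (fun t => Phi1 q q1 (q ^ r * A) (q1 ^ r * B) (q ^ r * C) t y) x := by
      simp only [jackson]
      rw [ih x hx0 hx, ih (q1 * x) hq1x0 hq1x]
      ring
    rw [hjx, stepX q q1 (q ^ r * A) (q1 ^ r * B) (q ^ r * C) x y hq hq1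
      (qPoch_shift_ne_zero hC r) hx0 hx hy]
    have hA : q * (q ^ r * A) = q ^ (r + 1) * A := by rw [pow_succ]; ring
    have hB : q1 * (q1 ^ r * B) = q1 ^ (r + 1) * B := by rw [pow_succ]; ring
    have hCC : q * (q ^ r * C) = q ^ (r + 1) * C := by rw [pow_succ]; ring
    rw [hA, hB, hCC]
    have eA : qPoch q A (r + 1) = qPoch q A r * (1 - q ^ r * A) := by
      rw [qPoch_succ_back]; ring_nf
    have eB : qPoch q1 B (r + 1) = qPoch q1 B r * (1 - q1 ^ r * B) := by
      rw [qPoch_succ_back]; ring_nf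
    have eC : qPoch q C (r + 1) = qPoch q C r * (1 - q ^ r * C) := by
      rw [qPoch_succ_back]; ring_nf
    have hCr : qPoch q C r ≠ 0 := hC r
    have hCfac : (1:ℂ) - q ^ r * C ≠ 0 := by
      intro h0
      exact hC (r + 1) (by rw [eC, h0, mul_zero])
    rw [eA, eB, eC]
    field_simp
    ring

lemma jackson_iter_congr (p : ℂ) (hp : ‖p‖ ≤ 1) :
    ∀ (r : ℕ) (f g : ℂ → ℂ), (∀ t, ‖t‖ < 1 → f t = g t) →
      ∀ x, ‖x‖ < 1 → (jackson p)^[r] f x = (jackson p)^[r] g x := by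
  intro r
  induction r with
  | zero => intro f g h x hx; simpa using h x hx
  | succ r ih =>
    intro f g h x hx
    rw [Function.iterate_succ_apply, Function.iterate_succ_apply]
    apply ih (jackson p f) (jackson p g) _ x hx
    intro t ht
    unfold jackson
    rw [h t ht, h (p * t) (by
      rw [norm_mul]
      calc ‖p‖ * ‖t‖ ≤ 1 * ‖t‖ :=
            mul_le_mul_of_nonneg_right hp (norm_nonneg t)
        _ < 1 := by simpa using ht)]

lemma jackson_iter_const (p c : ℂ) :
    ∀ (r : ℕ) (f : ℂ → ℂ) (x : ℂ),
      (jackson p)^[r] (fun t => c * f t) x = c * (jackson p)^[r] f x := by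
  intro r
  induction r with
  | zero => intro f x; simp
  | succ r ih =>
    intro f x
    rw [Function.iterate_succ_apply, Function.iterate_succ_apply]
    have : jackson p (fun t => c * f t) = fun t => c * jackson p f t := by
      funext t
      unfold jackson
      ring
    rw [this]
    exact ih (jackson p f) x


theorem stmt14 (q q1 A B C x y : ℂ)
    (hq0 : 0 < ‖q‖) (hq1 : ‖q‖ < 1)
    (hq10 : 0 < ‖q1‖) (hq11 : ‖q1‖ < 1)
    (hC : ∀ n : ℕ, qPoch q C n ≠ 0)
    (r s : ℕ) (hx0 : 0 < ‖x‖) (hx : ‖x‖ < 1) (hy0 : 0 < ‖y‖) (hy : ‖y‖ < 1) :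
    ((jackson q1)^[r]
        (fun t => ((jackson q)^[s] (fun u => Phi1 q q1 A B C t u)) y)) x =
      qPoch q A (r + s) * qPoch q1 B r /
          ((1 - q1) ^ r * (1 - q) ^ s * qPoch q C (r + s)) *
        Phi1 q q1 (q ^ (r + s) * A) (q1 ^ r * B) (q ^ (r + s) * C) x y := by
  have hqne0 : q ≠ 0 := fun h => by simp [h] at hq0
  have hq1ne0 : q1 ≠ 0 := fun h => by simp [h] at hq10
  have hxne : x ≠ 0 := fun h => by simp [h] at hx0
  have hyne : y ≠ 0 := fun h => by simp [h] at hy0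
  have hCs : ∀ n, qPoch q (q ^ s * C) n ≠ 0 := qPoch_shift_ne_zero hC s
  set cs : ℂ := qPoch q A s / ((1 - q) ^ s * qPoch q C s) with hcs
  have h1 : ∀ t, ‖t‖ < 1 →
      ((jackson q)^[s] (fun u => Phi1 q q1 A B C t u)) y
        = cs * Phi1 q q1 (q ^ s * A) B (q ^ s * C) t y := fun t ht =>
    iterY q q1 A B C t hq1 hq11 hqne0 hC ht s y hyne hy
  rw [jackson_iter_congr q1 hq11.le r _
    (fun t => cs * Phi1 q q1 (q ^ s * A) B (q ^ s * C) t y) h1 x hx]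
  rw [jackson_iter_const q1 cs r (fun t => Phi1 q q1 (q ^ s * A) B (q ^ s * C) t y) x]
  rw [iterX q q1 (q ^ s * A) B (q ^ s * C) y hq1 hq11 hq1ne0 hCs hy r x hxne hx]
  have hA : q ^ r * (q ^ s * A) = q ^ (r + s) * A := by rw [pow_add]; ring
  have hCC : q ^ r * (q ^ s * C) = q ^ (r + s) * C := by rw [pow_add]; ring
  rw [hA, hCC]
  have eA : qPoch q A (r + s) = qPoch q A s * qPoch q (q ^ s * A) r := by
    rw [add_comm, qPoch_add]
  have eC : qPoch q C (r + s) = qPoch q C s * qPoch q (q ^ s * C) r := by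
    rw [add_comm, qPoch_add]
  rw [eA, eC, hcs]
  have h1q : (1:ℂ) - q ≠ 0 := one_sub_ne_of_abs_lt hq1
  have h1q1 : (1:ℂ) - q1 ≠ 0 := one_sub_ne_of_abs_lt hq11
  have hC0 : qPoch q C s ≠ 0 := hC s
  have hCr : qPoch q (q ^ s * C) r ≠ 0 := hCs r
  field_simp
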